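/- Let q ∈ (0,1], and let h ∈ ℓ^q(ℤ^d) and c ∈ ℓ^p(ℤ^d) for p ∈ [q,∞]. Then the convolution h * c defined by (h*c)(j) = Σ_k h(k) c(j−k) satisfies ‖h*c‖_{ℓ^p} ≤ ‖h‖_{ℓ^q} ‖c‖_{ℓ^p}. -/

import Mathlib

open MeasureTheory
open scoped ENNReal NNReal

private lemma sum_rpow_le' {ι : Type*} (s : Finset ι) (x : ι → ℝ≥0∞) {r : ℝ}
    (hr0 : 0 < r) (hr1 : r ≤ 1) : (∑ i ∈ s, x i) ^ r ≤ ∑ i ∈ s, x i ^ r := by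
  induction s using Finset.cons_induction with
  | empty => simp [ENNReal.zero_rpow_of_pos hr0]
  | cons a s ha ih =>
      rw [Finset.sum_cons, Finset.sum_cons]
      calc (x a + ∑ i ∈ s, x i) ^ r ≤ x a ^ r + (∑ i ∈ s, x i) ^ r :=
            ENNReal.rpow_add_le_add_rpow _ _ hr0.le hr1
        _ ≤ x a ^ r + ∑ i ∈ s, x i ^ r := by gcongr

private lemma tsum_rpow_le' {ι : Type*} (x : ι → ℝ≥0∞) {r : ℝ}
    (hr0 : 0 < r) (hr1 : r ≤ 1) : (∑' i, x i) ^ r ≤ ∑' i, x i ^ r := by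
  have h : ∑' i, x i ≤ (∑' i, x i ^ r) ^ r⁻¹ := by
    rw [ENNReal.tsum_eq_iSup_sum]
    refine iSup_le fun s => ?_
    rw [ENNReal.le_rpow_inv_iff hr0]
    exact (sum_rpow_le' s x hr0 hr1).trans (ENNReal.sum_le_tsum s)
  calc (∑' i, x i) ^ r ≤ ((∑' i, x i ^ r) ^ r⁻¹) ^ r := ENNReal.rpow_le_rpow h hr0.le
    _ = ∑' i, x i ^ r := by
        rw [← ENNReal.rpow_mul, inv_mul_cancel₀ hr0.ne', ENNReal.rpow_one]

private lemma tsum_rpow_mono' {ι : Type*} (a : ι → ℝ≥0∞) {s r : ℝ}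
    (hs0 : 0 < s) (hsr : s ≤ r) : ∑' i, a i ^ r ≤ (∑' i, a i ^ s) ^ (r / s) := by
  have hr0 : 0 < r := hs0.trans_le hsr
  have h := tsum_rpow_le' (fun i => a i ^ r) (div_pos hs0 hr0) ((div_le_one hr0).mpr hsr)
  simp_rw [← ENNReal.rpow_mul, mul_div_cancel₀ s hr0.ne'] at h
  calc ∑' i, a i ^ r = ((∑' i, a i ^ r) ^ (s / r)) ^ (r / s) := by
        rw [← ENNReal.rpow_mul, div_mul_div_comm, mul_comm, div_self (by positivity),
          ENNReal.rpow_one]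
    _ ≤ (∑' i, a i ^ s) ^ (r / s) := ENNReal.rpow_le_rpow h (by positivity)

private lemma key' {ι : Type*} [AddCommGroup ι] [Countable ι] [MeasurableSpace ι]
    [MeasurableSingletonClass ι] (a b : ι → ℝ≥0∞) {s r : ℝ}
    (hs0 : 0 < s) (hs1 : s ≤ 1) (hsr : s ≤ r) :
    ∑' j, (∑' k, a k * b (j - k)) ^ r ≤
      (∑' k, a k ^ s) ^ (r / s) * ∑' j, b j ^ r := by
  have hr0 : 0 < r := hs0.trans_le hsr
  set A := ∑' k, a k ^ s with hA_def
  set B := ∑' j, b j ^ r with hB_def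
  have htrans : ∀ k : ι, ∑' j, b (j - k) ^ r = B := fun k =>
    (Equiv.subRight k).tsum_eq fun j => b j ^ r
  by_cases hB : B = 0
  · have hb : ∀ j, b j = 0 := by
      intro j
      have := (ENNReal.tsum_eq_zero.mp hB) j
      rcases ENNReal.rpow_eq_zero_iff.mp this with ⟨h1, _⟩ | ⟨_, h2⟩
      · exact h1
      · linarith
    simp [hb, ENNReal.zero_rpow_of_pos hr0]
  by_cases hA0 : A = 0
  · have ha : ∀ k, a k = 0 := by
      intro k
      have := (ENNReal.tsum_eq_zero.mp hA0) k
      rcases ENNReal.rpow_eq_zero_iff.mp this with ⟨h1, _⟩ | ⟨_, h2⟩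
      · exact h1
      · linarith
    simp [ha, ENNReal.zero_rpow_of_pos hr0]
  by_cases hAtop : A = ⊤
  · rw [hAtop, ENNReal.top_rpow_of_pos (by positivity), ENNReal.top_mul hB]
    exact le_top
  rcases le_or_gt r 1 with hr1 | hr1
  · -- case r ≤ 1
    calc ∑' j, (∑' k, a k * b (j - k)) ^ r
        ≤ ∑' j, ∑' k, (a k * b (j - k)) ^ r :=
          ENNReal.tsum_le_tsum fun j => tsum_rpow_le' _ hr0 hr1
      _ = ∑' k, ∑' j, a k ^ r * b (j - k) ^ r := by
          simp_rw [ENNReal.mul_rpow_of_nonneg _ _ hr0.le]; exact ENNReal.tsum_comm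
      _ = (∑' k, a k ^ r) * B := by
          simp_rw [ENNReal.tsum_mul_left]
          rw [← ENNReal.tsum_mul_right]
          exact tsum_congr fun k => by rw [htrans k]
      _ ≤ A ^ (r / s) * B := by
          gcongr
          exact tsum_rpow_mono' a hs0 hsr
  · -- case 1 < r
    have hsr' : s < r := hs1.trans_lt hr1
    set r' : ℝ := r / (r - 1) with hr'_def
    have hconj : r'.HolderConjugate r := (Real.HolderConjugate.conjExponent hr1).symm
    have hr'0 : 0 < r' := hconj.pos
    set t : ℝ := (1 - s / r) * r' with ht_def
    have hrne : r - 1 > 0 := by linarith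
    have ht_eq : t = (r - s) / (r - 1) := by
      field_simp [ht_def, hr'_def]
      rw [ht_def, hr'_def]
      field_simp
    have hst : s ≤ t := by
      rw [ht_eq, le_div_iff₀ hrne]
      nlinarith
    have ht0 : 0 < t := hs0.trans_le hst
    set e : ℝ := (r - s) / (s * r) with he_def
    have hj : ∀ j : ι, (∑' k, a k * b (j - k)) ≤
        A ^ e * (∑' k, a k ^ s * b (j - k) ^ r) ^ (1 / r) := by
      intro j
      have hsplit : ∀ k, a k * b (j - k) =
          (a k ^ (1 - s / r)) * (a k ^ (s / r) * b (j - k)) := by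
        intro k
        have h1 : (0:ℝ) ≤ 1 - s / r := by
          rw [sub_nonneg, div_le_one hr0]; exact hsr'.le
        rw [← mul_assoc, ← ENNReal.rpow_add_of_nonneg _ _ h1 (by positivity),
          sub_add_cancel, ENNReal.rpow_one]
      have hholder := ENNReal.lintegral_mul_le_Lp_mul_Lq Measure.count hconj
        (f := fun k => a k ^ (1 - s / r)) (g := fun k => a k ^ (s / r) * b (j - k))
        (measurable_of_countable _).aemeasurable (measurable_of_countable _).aemeasurable
      simp only [Pi.mul_apply, lintegral_count] at hholder
      calc (∑' k, a k * b (j - k))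
          = ∑' k, (a k ^ (1 - s / r)) * (a k ^ (s / r) * b (j - k)) :=
            tsum_congr hsplit
        _ ≤ (∑' k, (a k ^ (1 - s / r)) ^ r') ^ (1 / r') *
            (∑' k, (a k ^ (s / r) * b (j - k)) ^ r) ^ (1 / r) := hholder
        _ = (∑' k, a k ^ t) ^ (1 / r') *
            (∑' k, a k ^ s * b (j - k) ^ r) ^ (1 / r) := by
            congr 1
            · congr 1; exact tsum_congr fun k => by rw [← ENNReal.rpow_mul]
            · congr 1
              exact tsum_congr fun k => by
                rw [ENNReal.mul_rpow_of_nonneg _ _ hr0.le, ← ENNReal.rpow_mul,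
                  div_mul_cancel₀ s hr0.ne']
        _ ≤ (A ^ (t / s)) ^ (1 / r') *
            (∑' k, a k ^ s * b (j - k) ^ r) ^ (1 / r) := by
            gcongr
            exact tsum_rpow_mono' a hs0 hst
        _ = A ^ e * (∑' k, a k ^ s * b (j - k) ^ r) ^ (1 / r) := by
            have hexp : t / s * (1 / r') = e := by
              rw [ht_eq, hr'_def, he_def]
              field_simp
            rw [← ENNReal.rpow_mul, hexp]
    calc ∑' j, (∑' k, a k * b (j - k)) ^ r
        ≤ ∑' j, (A ^ e * (∑' k, a k ^ s * b (j - k) ^ r) ^ (1 / r)) ^ r :=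
          ENNReal.tsum_le_tsum fun j => ENNReal.rpow_le_rpow (hj j) hr0.le
      _ = ∑' j, A ^ (e * r) * (∑' k, a k ^ s * b (j - k) ^ r) := by
          refine tsum_congr fun j => ?_
          rw [ENNReal.mul_rpow_of_nonneg _ _ hr0.le, ← ENNReal.rpow_mul,
            ← ENNReal.rpow_mul, one_div, inv_mul_cancel₀ hr0.ne', ENNReal.rpow_one]
      _ = A ^ (e * r) * (A * B) := by
          rw [ENNReal.tsum_mul_left]
          congr 1
          rw [ENNReal.tsum_comm (f := fun j k => a k ^ s * b (j - k) ^ r)]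
          simp_rw [ENNReal.tsum_mul_left]
          rw [← ENNReal.tsum_mul_right]
          exact tsum_congr fun k => by rw [htrans k]
      _ = A ^ (r / s) * B := by
          rw [← mul_assoc]
          congr 1
          calc A ^ (e * r) * A = A ^ (e * r) * A ^ (1:ℝ) := by rw [ENNReal.rpow_one]
            _ = A ^ (e * r + 1) := (ENNReal.rpow_add _ _ hA0 hAtop).symm
            _ = A ^ (r / s) := by
                congr 1
                rw [he_def]
                field_simp
                ring

theorem stmt4 (d : ℕ) (p q : ℝ≥0∞) (hq0 : 0 < q) (hq1 : q ≤ 1) (hpq : q ≤ p)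
    (h c : (Fin d → ℤ) → ℂ)
    (hh : MemLp h q Measure.count) (hc : MemLp c p Measure.count) :
    eLpNorm (fun j => ∑' k, h k * c (j - k)) p Measure.count ≤
      eLpNorm h q Measure.count * eLpNorm c p Measure.count := by
  set a : (Fin d → ℤ) → ℝ≥0∞ := fun k => (‖h k‖₊ : ℝ≥0∞) with ha_def
  set b : (Fin d → ℤ) → ℝ≥0∞ := fun k => (‖c k‖₊ : ℝ≥0∞) with hb_def
  have step : ∀ j : Fin d → ℤ, (‖∑' k, h k * c (j - k)‖₊ : ℝ≥0∞) ≤ ∑' k, a k * b (j - k) := by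
    intro j
    have heq : ∀ k : Fin d → ℤ, a k * b (j - k) = ((‖h k * c (j - k)‖₊ : ℝ≥0) : ℝ≥0∞) := by
      intro k; rw [nnnorm_mul, ENNReal.coe_mul]
    rw [tsum_congr heq]
    by_cases htop : (∑' k : Fin d → ℤ, ((‖h k * c (j - k)‖₊ : ℝ≥0) : ℝ≥0∞)) = ⊤
    · rw [htop]; exact le_top
    · have hs : Summable fun k : Fin d → ℤ => ‖h k * c (j - k)‖₊ :=
        ENNReal.tsum_coe_ne_top_iff_summable.mp htop
      calc (‖∑' k, h k * c (j - k)‖₊ : ℝ≥0∞)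
          ≤ ((∑' k, ‖h k * c (j - k)‖₊ : ℝ≥0) : ℝ≥0∞) :=
            ENNReal.coe_le_coe.mpr (nnnorm_tsum_le hs)
        _ = ∑' k : Fin d → ℤ, ((‖h k * c (j - k)‖₊ : ℝ≥0) : ℝ≥0∞) := ENNReal.coe_tsum hs
  have hq_top : q ≠ ∞ := ne_top_of_le_ne_top ENNReal.one_ne_top hq1
  set s : ℝ := q.toReal with hs_def
  have hs0 : 0 < s := ENNReal.toReal_pos hq0.ne' hq_top
  have hs1 : s ≤ 1 := by
    simpa using ENNReal.toReal_mono ENNReal.one_ne_top hq1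
  have hp0 : p ≠ 0 := (hq0.trans_le hpq).ne'
  have eLq : eLpNorm h q Measure.count = (∑' k, a k ^ s) ^ (1 / s) := by
    rw [eLpNorm_eq_lintegral_rpow_enorm_toReal hq0.ne' hq_top, lintegral_count]
    rfl
  have hsum_a : ∑' k, a k ≤ (∑' k, a k ^ s) ^ (1 / s) := by
    have := tsum_rpow_mono' a hs0 (r := 1) hs1
    simpa using this
  by_cases hp_top : p = ∞
  · subst hp_top
    rw [eLpNorm_exponent_top, eLpNorm_exponent_top]
    set M := eLpNormEssSup c Measure.count with hM_def
    have hM : ∀ j : Fin d → ℤ, b j ≤ M := by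
      intro j
      by_contra hlt
      have hae := enorm_ae_le_eLpNormEssSup c (Measure.count : Measure (Fin d → ℤ))
      rw [ae_iff] at hae
      have hsub : ({j} : Set (Fin d → ℤ)) ⊆ {y : Fin d → ℤ | ¬ (‖c y‖₊ : ℝ≥0∞) ≤ M} := by
        intro x hx; rw [Set.mem_singleton_iff] at hx; subst hx; exact hlt
      have h1 : (Measure.count : Measure (Fin d → ℤ)) {j} = 0 :=
        le_antisymm (hae ▸ measure_mono hsub) zero_le
      rw [Measure.count_singleton] at h1
      exact one_ne_zero h1
    have bound : ∀ j : Fin d → ℤ, (‖∑' k, h k * c (j - k)‖₊ : ℝ≥0∞) ≤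
        (∑' k, a k ^ s) ^ (1 / s) * M := by
      intro j
      calc (‖∑' k, h k * c (j - k)‖₊ : ℝ≥0∞) ≤ ∑' k, a k * b (j - k) := step j
        _ ≤ ∑' k, a k * M := ENNReal.tsum_le_tsum fun k => mul_le_mul_right (hM _) _
        _ = (∑' k, a k) * M := ENNReal.tsum_mul_right
        _ ≤ (∑' k, a k ^ s) ^ (1 / s) * M := mul_le_mul_left hsum_a _
    rw [eLq]
    exact essSup_le_of_ae_le _ (Filter.Eventually.of_forall bound)
  · set r : ℝ := p.toReal with hr_def
    have hr0 : 0 < r := ENNReal.toReal_pos hp0 hp_top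
    have hsr : s ≤ r := ENNReal.toReal_mono hp_top hpq
    rw [eLpNorm_eq_lintegral_rpow_enorm_toReal hp0 hp_top, lintegral_count, eLq,
      eLpNorm_eq_lintegral_rpow_enorm_toReal hp0 hp_top (f := c), lintegral_count]
    calc (∑' j, (‖∑' k, h k * c (j - k)‖₊ : ℝ≥0∞) ^ r) ^ (1 / r)
        ≤ (∑' j, (∑' k, a k * b (j - k)) ^ r) ^ (1 / r) := by
          gcongr with j
          exact step j
      _ ≤ ((∑' k, a k ^ s) ^ (r / s) * ∑' j, b j ^ r) ^ (1 / r) := by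
          gcongr
          exact key' a b hs0 hs1 hsr
      _ = (∑' k, a k ^ s) ^ (1 / s) * (∑' j, b j ^ r) ^ (1 / r) := by
          rw [ENNReal.mul_rpow_of_nonneg _ _ (by positivity), ← ENNReal.rpow_mul]
          congr 2
          field_simp
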